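/- Let (A, τ) be a noncommutative probability space and let p, q ∈ A be free idempotents (p² = p, q² = q) with τ(p) = τ(q) = 1/2. Then for every n ≥ 1, τ((p + q)ⁿ) = ∫₀² xⁿ · (1/(π√(x(2 − x)))) dx. That is, the distribution of the sum of two free projections of trace 1/2 is the arcsine-type law with density 1/(π√(x(2 − x))) on the interval (0, 2). -/

import Mathlib

set_option linter.unusedSectionVars false
set_option maxHeartbeats 1000000

open scoped Classical

/-- A family `{A_i ; i ∈ I}` of unital subalgebras of `A` is *free* with respect to the
linear functional `τ` if whenever `a₁, …, a_k` are centered (`τ (a j) = 0`) and each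
`a_j` lies in some `A_{i_j}` with consecutive indices distinct, then `τ (a₁ ⋯ a_k) = 0`. -/
def IsFreeFamily {A : Type*} [Ring A] [Algebra ℂ A] {ι : Type*}
    (τ : A →ₗ[ℂ] ℂ) (Alg : ι → Subalgebra ℂ A) : Prop :=
  ∀ (k : ℕ) (idx : Fin (k + 1) → ι) (a : Fin (k + 1) → A),
    (∀ j, a j ∈ Alg (idx j)) →
    (∀ j : Fin k, idx j.castSucc ≠ idx j.succ) →
    (∀ j, τ (a j) = 0) →
    τ (List.ofFn a).prod = 0

namespace FreeArcsine


lemma sum_choose_sq (k : ℕ) :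
    ∑ i ∈ Finset.range (k + 1), (k.choose i) ^ 2 = (2 * k).choose k := by
  have h := Nat.add_choose_eq k k k
  rw [Finset.Nat.sum_antidiagonal_eq_sum_range_succ_mk] at h
  rw [two_mul, h]
  refine Finset.sum_congr rfl fun i hi => ?_
  have hik : i ≤ k := by
    have := Finset.mem_range.mp hi; omega
  rw [Nat.choose_symm hik, sq]

variable {A : Type*} [Ring A] [Algebra ℂ A]

def altw (a b : A) : ℕ → A
  | 0 => 1
  | n + 1 => altw a b n * (if Even n then a else b)

lemma ofFn_alt (a b : A) (n : ℕ) :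
    (List.ofFn fun j : Fin n => if Even j.val then a else b).prod = altw a b n := by
  induction n with
  | zero => simp [altw]
  | succ n ih =>
    rw [List.ofFn_succ', List.prod_concat, altw]
    simp only [Fin.coe_castSucc, Fin.val_last]
    rw [ih]

lemma alt_vanish {ι : Type*} (τ : A →ₗ[ℂ] ℂ) {Alg : ι → Subalgebra ℂ A}
    (hfree : IsFreeFamily τ Alg) {i₀ i₁ : ι} (hne : i₀ ≠ i₁) {a b : A}
    (haS : a ∈ Alg i₀) (hbT : b ∈ Alg i₁) (hτa : τ a = 0) (hτb : τ b = 0) (k : ℕ) :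
    τ (altw a b (k + 1)) = 0 := by
  rw [← ofFn_alt]
  apply hfree k (fun j => if Even j.val then i₀ else i₁)
  · intro j; split <;> assumption
  · intro j
    simp only [Fin.coe_castSucc, Fin.val_succ]
    by_cases hj : Even (j.val)
    · rw [if_pos hj, if_neg (by simp [Nat.even_add_one, hj])]
      exact hne
    · rw [if_neg hj, if_pos (by simp [Nat.even_add_one, hj])]
      exact hne.symm
  · intro j; split <;> assumption

lemma altw_even (a b : A) (m : ℕ) : altw a b (2 * m) = (a * b) ^ m ∧
    altw a b (2 * m + 1) = (a * b) ^ m * a := by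
  induction m with
  | zero => constructor <;> simp [altw]
  | succ m ih =>
    have h1 : 2 * (m + 1) = (2 * m + 1) + 1 := by ring
    have h2 : altw a b (2 * (m + 1)) = (a * b) ^ (m + 1) := by
      rw [h1, altw, ih.2]
      have : ¬ Even (2 * m + 1) := by simp [Nat.even_add_one]
      rw [if_neg this, pow_succ, mul_assoc]
    exact ⟨h2, by rw [altw, h2]; have : Even (2 * (m + 1)) := even_two_mul _
                  rw [if_pos this]⟩

lemma tau_sym_pow {ι : Type*} (τ : A →ₗ[ℂ] ℂ) (hτ1 : τ 1 = 1)
    {Alg : ι → Subalgebra ℂ A} (hfree : IsFreeFamily τ Alg) {i₀ i₁ : ι} (hne : i₀ ≠ i₁)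
    {a b : A} (haS : a ∈ Alg i₀) (hbT : b ∈ Alg i₁)
    (haa : a * a = 1) (hbb : b * b = 1) (hτa : τ a = 0) (hτb : τ b = 0) (m : ℕ) :
    τ ((a + b) ^ m) = if Even m then ((m.choose (m / 2) : ℂ)) else 0 := by
  set c := a * b with hc
  set d := b * a with hd
  have hA : ∀ k, τ (altw a b (k + 1)) = 0 := alt_vanish τ hfree hne haS hbT hτa hτb
  have hB : ∀ k, τ (altw b a (k + 1)) = 0 := alt_vanish τ hfree hne.symm hbT haS hτb hτa
  have τc : ∀ k, τ (c ^ (k + 1)) = 0 := by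
    intro k
    have h := hA (2 * k + 1)
    rwa [show 2 * k + 1 + 1 = 2 * (k + 1) by ring, (altw_even a b (k + 1)).1] at h
  have τd : ∀ k, τ (d ^ (k + 1)) = 0 := by
    intro k
    have h := hB (2 * k + 1)
    rwa [show 2 * k + 1 + 1 = 2 * (k + 1) by ring, (altw_even b a (k + 1)).1] at h
  have τca : ∀ k, τ (c ^ k * a) = 0 := by
    intro k
    have h := hA (2 * k)
    rwa [(altw_even a b k).2] at h
  have τdb : ∀ k, τ (d ^ k * b) = 0 := by
    intro k
    have h := hB (2 * k)
    rwa [(altw_even b a k).2] at h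
  have hcd : c * d = 1 := by
    rw [hc, hd, mul_assoc, ← mul_assoc b b a, hbb, one_mul, haa]
  have hdc : d * c = 1 := by
    rw [hc, hd, mul_assoc, ← mul_assoc a a b, haa, one_mul, hbb]
  have hac : a * c = b := by rw [hc, ← mul_assoc, haa, one_mul]
  have hbd : b * d = a := by rw [hd, ← mul_assoc, hbb, one_mul]
  have had : a * d = c * a := by rw [hc, hd, mul_assoc]
  have hbc : b * c = d * b := by rw [hc, hd, mul_assoc]
  have hcdpow : ∀ i : ℕ, c ^ i * d ^ i = 1 := by
    intro i
    induction i with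
    | zero => simp
    | succ i ih =>
      rw [pow_succ, pow_succ', mul_assoc, ← mul_assoc c d, hcd, one_mul, ih]
  have τcd : ∀ i j : ℕ, τ (c ^ i * d ^ j) = if i = j then 1 else 0 := by
    intro i j
    rcases le_total i j with h | h
    · obtain ⟨e, rfl⟩ := Nat.exists_eq_add_of_le h
      rw [pow_add, ← mul_assoc, hcdpow, one_mul]
      cases e with
      | zero => simp [hτ1]
      | succ e => rw [τd e, eq_comm, if_neg (by omega)]
    · obtain ⟨e, rfl⟩ := Nat.exists_eq_add_of_le h
      rw [add_comm j e, pow_add, mul_assoc, hcdpow, mul_one]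
      cases e with
      | zero => simp [hτ1]
      | succ e => rw [τc e, if_neg (by omega)]
  have sAD : ∀ e : ℕ, a * d ^ e = c ^ e * a := by
    intro e
    induction e with
    | zero => simp
    | succ e ih =>
      rw [pow_succ d, ← mul_assoc, ih, pow_succ c, mul_assoc, mul_assoc, had, ← mul_assoc]
  have sBC : ∀ e : ℕ, b * c ^ e = d ^ e * b := by
    intro e
    induction e with
    | zero => simp
    | succ e ih =>
      rw [pow_succ c, ← mul_assoc, ih, pow_succ d, mul_assoc, mul_assoc, hbc, ← mul_assoc]
  have τacd : ∀ i j : ℕ, τ (a * (c ^ i * d ^ j)) = 0 := by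
    intro i j
    rcases le_total i j with h | h
    · obtain ⟨e, rfl⟩ := Nat.exists_eq_add_of_le h
      rw [pow_add, ← mul_assoc (c ^ i), hcdpow, one_mul, sAD e]
      exact τca e
    · obtain ⟨e, rfl⟩ := Nat.exists_eq_add_of_le h
      rw [add_comm j e, pow_add, mul_assoc, hcdpow, mul_one]
      cases e with
      | zero => simpa using hτa
      | succ e =>
        rw [pow_succ' c, ← mul_assoc, hac, sBC]
        exact τdb e
  have τbcd : ∀ i j : ℕ, τ (b * (c ^ i * d ^ j)) = 0 := by
    intro i j
    rcases le_total i j with h | h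
    · obtain ⟨e, rfl⟩ := Nat.exists_eq_add_of_le h
      rw [pow_add, ← mul_assoc (c ^ i), hcdpow, one_mul]
      cases e with
      | zero => simpa using hτb
      | succ e =>
        rw [pow_succ' d, ← mul_assoc, hbd, sAD]
        exact τca e
    · obtain ⟨e, rfl⟩ := Nat.exists_eq_add_of_le h
      rw [add_comm j e, pow_add, mul_assoc, hcdpow, mul_one, sBC e]
      exact τdb e
  have hcomm : Commute c d := by
    show c * d = d * c
    rw [hcd, hdc]
  have h1cd : (a * b) * (b * a) = 1 := by
    rw [mul_assoc, ← mul_assoc b b a, hbb, one_mul, haa]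
  have hss : (a + b) * (a + b) = (1 + c) * (1 + d) := by
    simp only [add_mul, mul_add, one_mul, mul_one, haa, hbb, hc, hd, h1cd]
    abel
  have hpow_even : ∀ k, (a + b) ^ (2 * k) = (1 + c) ^ k * (1 + d) ^ k := by
    intro k
    have hcomm1 : Commute (1 + c) (1 + d) :=
      (Commute.one_left _).add_left ((Commute.one_right c).add_right hcomm)
    rw [pow_mul, sq, hss, hcomm1.mul_pow]
  have key : ∀ (u v : ℕ) (x y : A),
      ((u : A) * x) * ((v : A) * y) = (u : A) * ((v : A) * (x * y)) := by
    intro u v x y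
    rw [mul_assoc, ← mul_assoc x, (Nat.cast_commute v x).symm.eq, mul_assoc]
  have move : ∀ (u : ℕ) (x y : A), x * ((u : A) * y) = (u : A) * (x * y) := by
    intro u x y
    rw [← mul_assoc, (Nat.cast_commute u x).symm.eq, mul_assoc]
  have τnat : ∀ (u : ℕ) (z : A), τ ((u : A) * z) = (u : ℂ) * τ z := by
    intro u z
    rw [← map_natCast (algebraMap ℂ A) u, ← Algebra.smul_def, map_smul, smul_eq_mul]
  have hsum : ∀ k, (1 + c) ^ k * (1 + d) ^ k =
      ∑ i ∈ Finset.range (k + 1), ∑ j ∈ Finset.range (k + 1),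
        ((k.choose i : A)) * ((k.choose j : A) * (c ^ (k - i) * d ^ (k - j))) := by
    intro k
    have h1 : (1 + c) ^ k = ∑ i ∈ Finset.range (k + 1), (k.choose i : A) * c ^ (k - i) := by
      rw [(Commute.one_left c).add_pow]
      refine Finset.sum_congr rfl fun i _ => ?_
      rw [one_pow, one_mul, (Nat.cast_commute (k.choose i) (c ^ (k - i))).eq]
    have h2 : (1 + d) ^ k = ∑ j ∈ Finset.range (k + 1), (k.choose j : A) * d ^ (k - j) := by
      rw [(Commute.one_left d).add_pow]
      refine Finset.sum_congr rfl fun j _ => ?_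
      rw [one_pow, one_mul, (Nat.cast_commute (k.choose j) (d ^ (k - j))).eq]
    rw [h1, h2, Finset.sum_mul_sum]
    refine Finset.sum_congr rfl fun i _ => Finset.sum_congr rfl fun j _ => ?_
    exact key _ _ _ _
  have heven : ∀ k, τ ((a + b) ^ (2 * k)) = (((2 * k).choose k : ℕ) : ℂ) := by
    intro k
    rw [hpow_even k, hsum k, map_sum]
    have hterm : ∀ i ∈ Finset.range (k + 1),
        τ (∑ j ∈ Finset.range (k + 1),
          ((k.choose i : A)) * ((k.choose j : A) * (c ^ (k - i) * d ^ (k - j)))) =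
        ((k.choose i : ℂ)) ^ 2 := by
      intro i hi
      rw [map_sum]
      have hij : ∀ j ∈ Finset.range (k + 1),
          τ (((k.choose i : A)) * ((k.choose j : A) * (c ^ (k - i) * d ^ (k - j)))) =
          if j = i then ((k.choose i : ℂ)) ^ 2 else 0 := by
        intro j hj
        rw [τnat, τnat, τcd]
        by_cases hji : j = i
        · subst hji
          rw [if_pos rfl, if_pos rfl, mul_one, sq]
        · rw [if_neg hji, if_neg (by
            have hi' := Finset.mem_range.mp hi
            have hj' := Finset.mem_range.mp hj
            omega), mul_zero, mul_zero]
      rw [Finset.sum_congr rfl hij, Finset.sum_ite_eq' (Finset.range (k + 1)) i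
        (fun _ => ((k.choose i : ℂ)) ^ 2), if_pos hi]
    rw [Finset.sum_congr rfl hterm]
    have : ∑ i ∈ Finset.range (k + 1), ((k.choose i : ℂ)) ^ 2 =
        ((∑ i ∈ Finset.range (k + 1), (k.choose i) ^ 2 : ℕ) : ℂ) := by
      push_cast
      rfl
    rw [this, sum_choose_sq k]
  have hodd : ∀ k, τ ((a + b) ^ (2 * k + 1)) = 0 := by
    intro k
    rw [pow_succ', hpow_even k, hsum k, Finset.mul_sum, map_sum]
    rw [Finset.sum_eq_zero]
    intro i _
    rw [Finset.mul_sum, map_sum, Finset.sum_eq_zero]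
    intro j _
    rw [move, move, τnat, τnat, add_mul, map_add, τacd, τbcd, add_zero, mul_zero, mul_zero]
  rcases Nat.even_or_odd m with he | ho
  · obtain ⟨k, hk⟩ := he
    subst hk
    rw [if_pos ⟨k, rfl⟩, show k + k = 2 * k from (two_mul k).symm, heven k,
      Nat.mul_div_cancel_left k two_pos]
  · obtain ⟨k, hk⟩ := ho
    subst hk
    rw [hodd k, if_neg (by simp [Nat.even_add_one])]


open Real Set MeasureTheory


lemma cos_int_aux (k : ℕ) :
    (∫ x in (0:ℝ)..π, Real.cos x ^ (2 * k) = π * ((2 * k).choose k) / 4 ^ k)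
    ∧ (∫ x in (0:ℝ)..π, Real.cos x ^ (2 * k + 1) = 0) := by
  induction k with
  | zero =>
    constructor
    · simp
    · simpa using integral_cos
  | succ k ih =>
    have hcb : (k + 1) * ((2 * k + 2).choose (k + 1)) = 2 * (2 * k + 1) * ((2 * k).choose k) := by
      have := Nat.succ_mul_centralBinom_succ k
      simpa [Nat.centralBinom, Nat.mul_succ] using this
    have hcbR : ((k : ℝ) + 1) * ((2 * k + 2).choose (k + 1)) =
        2 * (2 * (k : ℝ) + 1) * ((2 * k).choose k) := by exact_mod_cast hcb
    constructor
    · rw [show 2 * (k + 1) = 2 * k + 2 by ring, integral_cos_pow, ih.1, Real.sin_pi,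
        Real.sin_zero]
      have h4 : (4:ℝ) ^ (k+1) = 4 ^ k * 4 := by ring
      rw [h4]
      have hk4 : (0:ℝ) < 4 ^ k := by positivity
      push_cast
      field_simp
      linear_combination (-(2:ℝ) * π) * hcbR
    · rw [show 2 * (k + 1) + 1 = (2 * k + 1) + 2 by ring, integral_cos_pow, ih.2, Real.sin_pi,
        Real.sin_zero]
      simp

lemma cos_int (m : ℕ) :
    ∫ x in (0:ℝ)..π, Real.cos x ^ m =
      if Even m then π * (m.choose (m / 2)) / 2 ^ m else 0 := by
  rcases Nat.even_or_odd m with ⟨k, hk⟩ | ⟨k, hk⟩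
  · subst hk
    rw [if_pos ⟨k, rfl⟩, show k + k = 2 * k from (two_mul k).symm,
      Nat.mul_div_cancel_left k two_pos, (cos_int_aux k).1, pow_mul]
    norm_num
  · subst hk
    rw [(cos_int_aux k).2, if_neg (by simp [Nat.even_add_one])]

lemma image_one_add_cos : (fun θ : ℝ => 1 + Real.cos θ) '' Set.Ioo 0 π = Set.Ioo (0:ℝ) 2 := by
  ext y
  simp only [Set.mem_image, Set.mem_Ioo]
  constructor
  · rintro ⟨θ, ⟨h0, hπ⟩, rfl⟩
    have h0m : (0:ℝ) ∈ Set.Icc (0:ℝ) π := ⟨le_refl 0, Real.pi_pos.le⟩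
    have hθm : θ ∈ Set.Icc (0:ℝ) π := ⟨h0.le, hπ.le⟩
    have hπm : π ∈ Set.Icc (0:ℝ) π := ⟨Real.pi_pos.le, le_refl π⟩
    have hlt : Real.cos θ < Real.cos 0 := Real.strictAntiOn_cos h0m hθm h0
    have hgt : Real.cos π < Real.cos θ := Real.strictAntiOn_cos hθm hπm hπ
    rw [Real.cos_zero] at hlt
    rw [Real.cos_pi] at hgt
    constructor <;> linarith
  · rintro ⟨hy0, hy2⟩
    refine ⟨Real.arccos (y - 1), ⟨?_, ?_⟩, ?_⟩
    · exact Real.arccos_pos.mpr (by linarith)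
    · rcases (Real.arccos_le_pi (y - 1)).lt_or_eq with h | h
      · exact h
      · exfalso
        have hc := Real.cos_arccos (by linarith : (-1:ℝ) ≤ y - 1) (by linarith)
        rw [h, Real.cos_pi] at hc
        linarith
    · rw [Real.cos_arccos (by linarith) (by linarith)]; ring

lemma arcsine_substitution (n : ℕ) :
    ∫ x in (0:ℝ)..2, x ^ n * (1 / (π * Real.sqrt (x * (2 - x)))) =
      (1 / π) * ∫ θ in (0:ℝ)..π, (1 + Real.cos θ) ^ n := by
  have hder : ∀ θ ∈ Set.Ioo (0:ℝ) π,
      HasDerivWithinAt (fun θ : ℝ => 1 + Real.cos θ) (-Real.sin θ) (Set.Ioo 0 π) θ :=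
    fun θ _ => ((Real.hasDerivAt_cos θ).const_add 1).hasDerivWithinAt
  have hinj : Set.InjOn (fun θ : ℝ => 1 + Real.cos θ) (Set.Ioo 0 π) := by
    intro x hx y hy hxy
    exact Real.injOn_cos ⟨hx.1.le, hx.2.le⟩ ⟨hy.1.le, hy.2.le⟩ (by linarith [add_left_cancel hxy])
  calc
    ∫ x in (0:ℝ)..2, x ^ n * (1 / (π * Real.sqrt (x * (2 - x))))
        = ∫ x in Set.Ioo (0:ℝ) 2, x ^ n * (1 / (π * Real.sqrt (x * (2 - x)))) := by
      rw [intervalIntegral.integral_of_le (by norm_num), MeasureTheory.integral_Ioc_eq_integral_Ioo]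
    _ = ∫ θ in Set.Ioo (0:ℝ) π, |(-Real.sin θ)| •
          ((1 + Real.cos θ) ^ n * (1 / (π * Real.sqrt ((1 + Real.cos θ) * (2 - (1 + Real.cos θ)))))) := by
      rw [← image_one_add_cos,
        MeasureTheory.integral_image_eq_integral_abs_deriv_smul measurableSet_Ioo hder hinj]
    _ = ∫ θ in Set.Ioo (0:ℝ) π, (1 / π) * (1 + Real.cos θ) ^ n := by
      apply MeasureTheory.setIntegral_congr_fun measurableSet_Ioo
      intro θ hθ
      obtain ⟨h0, hπ⟩ := hθ
      have hs : 0 < Real.sin θ := Real.sin_pos_of_pos_of_lt_pi h0 hπ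
      have hsq : (1 + Real.cos θ) * (2 - (1 + Real.cos θ)) = Real.sin θ ^ 2 := by
        have h := Real.sin_sq_add_cos_sq θ
        nlinarith [h]
      have hx : Real.sqrt ((1 + Real.cos θ) * (2 - (1 + Real.cos θ))) = Real.sin θ := by
        rw [hsq, Real.sqrt_sq hs.le]
      simp only [smul_eq_mul, abs_neg, abs_of_pos hs, hx]
      have hπ0 : (Real.pi : ℝ) ≠ 0 := Real.pi_ne_zero
      field_simp
    _ = (1 / π) * ∫ θ in Set.Ioo (0:ℝ) π, (1 + Real.cos θ) ^ n := by
      rw [MeasureTheory.integral_const_mul]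
    _ = (1 / π) * ∫ θ in (0:ℝ)..π, (1 + Real.cos θ) ^ n := by
      rw [intervalIntegral.integral_of_le Real.pi_pos.le,
        MeasureTheory.integral_Ioc_eq_integral_Ioo]

lemma int_one_add_cos (n : ℕ) :
    ∫ θ in (0:ℝ)..π, (1 + Real.cos θ) ^ n =
      ∑ m ∈ Finset.range (n + 1), (n.choose m : ℝ) * ∫ θ in (0:ℝ)..π, Real.cos θ ^ m := by
  have h : ∀ θ : ℝ, (1 + Real.cos θ) ^ n =
      ∑ m ∈ Finset.range (n + 1), (n.choose m : ℝ) * Real.cos θ ^ m := by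
    intro θ
    rw [add_comm, add_pow]
    refine Finset.sum_congr rfl fun m _ => ?_
    rw [one_pow, mul_one, mul_comm]
  simp_rw [h]
  rw [intervalIntegral.integral_finset_sum]
  · exact Finset.sum_congr rfl fun m _ => intervalIntegral.integral_const_mul _ _
  · intro m _
    exact Continuous.intervalIntegrable (by fun_prop) 0 π


end FreeArcsine

/-- The sum of two free idempotents `p, q` with `τ p = τ q = 1/2` has the arcsine-type
distribution with density `1/(π √(x(2 - x)))` on `(0, 2)`:
`τ((p + q)ⁿ) = ∫₀² xⁿ / (π √(x(2 - x))) dx` for all `n ≥ 1`. -/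
theorem free_projections_sum_arcsine {A : Type*} [Ring A] [Algebra ℂ A]
    (τ : A →ₗ[ℂ] ℂ) (hτ1 : τ 1 = 1)
    (p q : A) (hp : p * p = p) (hq : q * q = q)
    (hτp : τ p = 1 / 2) (hτq : τ q = 1 / 2)
    (hfree : IsFreeFamily τ ![Algebra.adjoin ℂ {p}, Algebra.adjoin ℂ {q}]) :
    ∀ n : ℕ, 0 < n →
      τ ((p + q) ^ n) =
        ((∫ x in (0:ℝ)..2, x ^ n * (1 / (Real.pi * Real.sqrt (x * (2 - x))))) : ℝ) := by
  intro n _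
  set a := p + p - 1 with ha'
  set b := q + q - 1 with hb'
  have haa : a * a = 1 := by
    have expand : (p + p - 1) * (p + p - 1) =
        (p * p + p * p + p * p + p * p) - (p + p + p + p) + 1 := by noncomm_ring
    rw [ha', expand, hp]
    abel
  have hbb : b * b = 1 := by
    have expand : (q + q - 1) * (q + q - 1) =
        (q * q + q * q + q * q + q * q) - (q + q + q + q) + 1 := by noncomm_ring
    rw [hb', expand, hq]
    abel
  have hτa : τ a = 0 := by
    rw [ha', map_sub, map_add, hτp, hτ1]; norm_num
  have hτb : τ b = 0 := by
    rw [hb', map_sub, map_add, hτq, hτ1]; norm_num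
  have hmem0 : a ∈ (![Algebra.adjoin ℂ {p}, Algebra.adjoin ℂ {q}] : Fin 2 → Subalgebra ℂ A) 0 := by
    have hpS : p ∈ Algebra.adjoin ℂ {p} := Algebra.subset_adjoin rfl
    simpa [ha'] using sub_mem (add_mem hpS hpS) (one_mem (Algebra.adjoin ℂ {p}))
  have hmem1 : b ∈ (![Algebra.adjoin ℂ {p}, Algebra.adjoin ℂ {q}] : Fin 2 → Subalgebra ℂ A) 1 := by
    have hqS : q ∈ Algebra.adjoin ℂ {q} := Algebra.subset_adjoin rfl
    simpa [hb'] using sub_mem (add_mem hqS hqS) (one_mem (Algebra.adjoin ℂ {q}))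
  have hne : (0 : Fin 2) ≠ 1 := by decide
  have hτs := FreeArcsine.tau_sym_pow τ hτ1 hfree hne hmem0 hmem1 haa hbb hτa hτb
  have τnat : ∀ (u : ℕ) (z : A), τ ((u : A) * z) = (u : ℂ) * τ z := by
    intro u z
    rw [← map_natCast (algebraMap ℂ A) u, ← Algebra.smul_def, map_smul, smul_eq_mul]
  have hsplit : p + q = (1 / 2 : ℂ) • ((a + b) + 2) := by
    have h1 : (a + b) + 2 = (p + q) + (p + q) := by
      have h2 : (2 : A) = 1 + 1 := one_add_one_eq_two.symm
      rw [ha', hb', h2]; abel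
    rw [h1, ← two_smul ℂ (p + q), smul_smul]
    norm_num
  have hcomm2 : Commute (a + b) (2 : A) := by
    have h2 : (2 : A) = ((2 : ℕ) : A) := by norm_cast
    rw [h2]
    exact (Nat.cast_commute 2 (a + b)).symm
  have hLHS : τ ((p + q) ^ n) = ∑ m ∈ Finset.range (n + 1),
      (n.choose m : ℂ) * (if Even m then ((m.choose (m / 2) : ℂ)) / 2 ^ m else 0) := by
    rw [hsplit, smul_pow, map_smul, smul_eq_mul, hcomm2.add_pow, map_sum, Finset.mul_sum]
    refine Finset.sum_congr rfl fun m hm => ?_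
    have hmn : m ≤ n := by have := Finset.mem_range.mp hm; omega
    have hterm : (a + b) ^ m * (2 : A) ^ (n - m) * ((n.choose m : ℕ) : A) =
        ((2 ^ (n - m) * n.choose m : ℕ) : A) * (a + b) ^ m := by
      have h2 : (2 : A) ^ (n - m) = ((2 ^ (n - m) : ℕ) : A) := by push_cast; ring
      rw [h2, mul_assoc, ← Nat.cast_mul,
        ← (Nat.cast_commute (2 ^ (n - m) * n.choose m) ((a + b) ^ m)).eq]
    rw [hterm, τnat, hτs m]
    have h2n : (2:ℂ) ^ (n - m) * 2 ^ m = 2 ^ n := by rw [← pow_add]; congr 1; omega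
    by_cases hev : Even m
    · rw [if_pos hev, if_pos hev]
      push_cast
      have hm0 : (2:ℂ) ^ m ≠ 0 := pow_ne_zero _ two_ne_zero
      have hn0 : (2:ℂ) ^ n ≠ 0 := pow_ne_zero _ two_ne_zero
      field_simp
      have hh : (1 / 2 : ℂ) ^ n * 2 ^ n = 1 := by rw [← mul_pow]; norm_num
      linear_combination ((n.choose m : ℂ) * (m.choose (m / 2) : ℂ) * (1 / 2) ^ n) * h2n +
        ((n.choose m : ℂ) * (m.choose (m / 2) : ℂ)) * hh
    · rw [if_neg hev, if_neg hev]; simp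
  have hRHS : (∫ x in (0:ℝ)..2, x ^ n * (1 / (Real.pi * Real.sqrt (x * (2 - x))))) =
      ∑ m ∈ Finset.range (n + 1),
        (n.choose m : ℝ) * (if Even m then ((m.choose (m / 2) : ℝ)) / 2 ^ m else 0) := by
    rw [FreeArcsine.arcsine_substitution n, FreeArcsine.int_one_add_cos n, Finset.mul_sum]
    refine Finset.sum_congr rfl fun m _ => ?_
    rw [FreeArcsine.cos_int m]
    by_cases hev : Even m
    · rw [if_pos hev, if_pos hev]
      have hπ : (Real.pi : ℝ) ≠ 0 := Real.pi_ne_zero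
      field_simp
    · rw [if_neg hev, if_neg hev]; simp
  rw [hLHS, hRHS]
  push_cast
  refine Finset.sum_congr rfl fun m _ => ?_
  by_cases hev : Even m
  · rw [if_pos hev, if_pos hev]; push_cast; ring
  · rw [if_neg hev, if_neg hev]; norm_num
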